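/- Fix ℓ > 0 and an even integer m ≥ 2, and let g(x) = (x²/(2ℓ²)) exp(−x²/(2ℓ²)) with Fourier coefficients c_k(g) = ∫_{-1/2}^{1/2} g(x) e^{−2πikx} dx. Then Σ_{k=1}^{m/2} |c_k(g)| < 7/2. -/

import Mathlib

open MeasureTheory Real

noncomputable section

/-- The `k`-th Fourier coefficient `c_k(g) = ∫_{-1/2}^{1/2} g(x) e^{−2πikx} dx`
of (the 1-periodic continuation of) a real-valued function `g` on `[-1/2,1/2]`. -/
def fourierCoeff1 (g : ℝ → ℝ) (k : ℤ) : ℂ :=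
  ∫ x in (-(1/2) : ℝ)..(1/2),
    ((g x : ℝ) : ℂ) * Complex.exp (-(2 * (π : ℂ) * Complex.I) * (k : ℂ) * (x : ℂ))

namespace DG

/-- `g c x = c x² e^{-c x²}` -/
def g (c x : ℝ) : ℝ := c * x ^ 2 * Real.exp (-(c * x ^ 2))
def g1 (c x : ℝ) : ℝ := (2*c*x - 2*c^2*x^3) * Real.exp (-(c * x ^ 2))
def g2 (c x : ℝ) : ℝ := (2*c - 10*c^2*x^2 + 4*c^3*x^4) * Real.exp (-(c * x ^ 2))

lemma hasDerivAt_exp_part (c x : ℝ) :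
    HasDerivAt (fun x : ℝ => Real.exp (-(c * x ^ 2))) (Real.exp (-(c * x ^ 2)) * (-(c * (2*x)))) x := by
  have h1 : HasDerivAt (fun x : ℝ => -(c * x ^ 2)) (-(c * (2*x))) x := by
    simpa using ((hasDerivAt_pow 2 x).const_mul c).fun_neg
  exact (Real.hasDerivAt_exp _).comp x h1

lemma hasDerivAt_g (c x : ℝ) : HasDerivAt (g c) (g1 c x) x := by
  have hp : HasDerivAt (fun x : ℝ => c * x ^ 2) (c * (2*x)) x := by
    simpa using (hasDerivAt_pow 2 x).const_mul c
  have h := hp.mul (hasDerivAt_exp_part c x)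
  have : g1 c x = c * (2*x) * Real.exp (-(c * x ^ 2))
      + c * x ^ 2 * (Real.exp (-(c * x ^ 2)) * (-(c * (2*x)))) := by
    unfold g1; ring
  rw [this]; exact h

lemma hasDerivAt_g1 (c x : ℝ) : HasDerivAt (g1 c) (g2 c x) x := by
  have hp : HasDerivAt (fun x : ℝ => 2*c*x - 2*c^2*x^3) (2*c - 2*c^2*(3*x^2)) x := by
    have h3 : HasDerivAt (fun x : ℝ => x^3) (3*x^2) x := by simpa using hasDerivAt_pow 3 x
    have h1 : HasDerivAt (fun x : ℝ => 2*c*x) (2*c) x := by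
      simpa using (hasDerivAt_id x).const_mul (2*c)
    simpa using h1.fun_sub (h3.const_mul (2*c^2))
  have h := hp.mul (hasDerivAt_exp_part c x)
  have : g2 c x = (2*c - 2*c^2*(3*x^2)) * Real.exp (-(c * x ^ 2))
      + (2*c*x - 2*c^2*x^3) * (Real.exp (-(c * x ^ 2)) * (-(c * (2*x)))) := by
    unfold g2; ring
  rw [this]; exact h

lemma cont_g (c : ℝ) : Continuous (g c) := by unfold g; fun_prop
lemma cont_g1 (c : ℝ) : Continuous (g1 c) := by unfold g1; fun_prop
lemma cont_g2 (c : ℝ) : Continuous (g2 c) := by unfold g2; fun_prop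

def dd (k : ℤ) : ℂ := -(2 * (π : ℂ) * Complex.I) * (k : ℂ)
def ee (k : ℤ) (x : ℝ) : ℂ := Complex.exp (dd k * (x : ℂ))

lemma hasDerivAt_ee (k : ℤ) (x : ℝ) : HasDerivAt (ee k) (dd k * ee k x) x := by
  have h0 : HasDerivAt (fun z : ℂ => dd k * z) (dd k) (x : ℂ) := by
    simpa using (hasDerivAt_id (x : ℂ)).const_mul (dd k)
  have h : HasDerivAt (fun z : ℂ => Complex.exp (dd k * z))
      (Complex.exp (dd k * (x:ℂ)) * dd k) (x : ℂ) :=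
    (Complex.hasDerivAt_exp _).comp _ h0
  have h2 := h.comp_ofReal
  have h3 : dd k * ee k x = Complex.exp (dd k * (x:ℂ)) * dd k := mul_comm _ _
  rw [h3]; exact h2

lemma cont_ee (k : ℤ) : Continuous (ee k) := by
  unfold ee; fun_prop

lemma norm_ee (k : ℤ) (x : ℝ) : ‖ee k x‖ = 1 := by
  have h : dd k * (x : ℂ) = ((-(2*π*(k:ℝ)*x) : ℝ) : ℂ) * Complex.I := by
    unfold dd; push_cast; ring
  rw [ee, h, Complex.norm_exp_ofReal_mul_I]

lemma ee_half (k : ℤ) : ee k (1/2) = ee k (-(1/2)) := by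
  have h1 : Complex.exp (dd k) = 1 := by
    have : dd k = ((-k : ℤ) : ℂ) * (2 * (π:ℂ) * Complex.I) := by push_cast [dd]; ring
    rw [this]; exact Complex.exp_int_mul_two_pi_mul_I (-k)
  have : dd k * ((1/2 : ℝ) : ℂ) = dd k * ((-(1/2) : ℝ) : ℂ) + dd k := by
    push_cast; ring
  rw [ee, this, Complex.exp_add, h1, mul_one]; rfl

lemma norm_dd (k : ℤ) (hk : 1 ≤ k) : ‖dd k‖ = 2 * π * (k : ℝ) := by
  have : ‖dd k‖ = ‖(2 * (π : ℂ) * Complex.I)‖ * ‖((k : ℤ) : ℂ)‖ := by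
    rw [dd, neg_mul, norm_neg, norm_mul]
  rw [this]
  have h1 : ‖(2 * (π : ℂ) * Complex.I)‖ = 2 * π := by
    simp [norm_mul, Complex.norm_real,
      abs_of_pos pi_pos]
  have h2 : ‖((k : ℤ) : ℂ)‖ = (k : ℝ) := by
    rw [Complex.norm_intCast]
    simpa using abs_of_pos (by exact_mod_cast hk : (0:ℝ) < (k:ℝ))
  rw [h1, h2]

lemma I0_le {c : ℝ} (hc : 0 < c) :
    ∫ x in (-(1/2) : ℝ)..(1/2), Real.exp (-(c * x ^ 2)) ≤ Real.sqrt (π / c) := by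
  rw [intervalIntegral.integral_of_le (by norm_num : (-(1/2):ℝ) ≤ 1/2)]
  calc ∫ x in Set.Ioc (-(1/2):ℝ) (1/2), Real.exp (-(c * x ^ 2))
      ≤ ∫ x : ℝ, Real.exp (-(c * x ^ 2)) := by
        apply setIntegral_le_integral
        · simpa [neg_mul] using integrable_exp_neg_mul_sq hc
        · exact Filter.Eventually.of_forall fun x => (Real.exp_pos _).le
    _ = Real.sqrt (π / c) := by simpa [neg_mul] using integral_gaussian c

lemma intg_exp (c a b : ℝ) : IntervalIntegrable (fun x => Real.exp (-(c * x ^ 2))) volume a b :=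
  (by fun_prop : Continuous fun x : ℝ => Real.exp (-(c * x ^ 2))).intervalIntegrable a b

/-- `∫ g ≤ √(π/c)/2` -/
lemma integral_g_le {c : ℝ} (hc : 0 < c) :
    ∫ x in (-(1/2) : ℝ)..(1/2), g c x ≤ Real.sqrt (π / c) / 2 := by
  set F : ℝ → ℝ := fun x => -(x/2) * Real.exp (-(c * x ^ 2)) with hF
  have hder : ∀ x ∈ Set.uIcc (-(1/2):ℝ) (1/2), HasDerivAt F (g c x - (1/2) * Real.exp (-(c * x ^ 2))) x := by
    intro x _
    have h1 : HasDerivAt (fun x : ℝ => -(x/2)) (-(1/2)) x := by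
      simpa using ((hasDerivAt_id x).div_const 2).fun_neg
    have he : HasDerivAt (fun x : ℝ => Real.exp (-(c * x ^ 2)))
        (Real.exp (-(c * x ^ 2)) * (-(c * (2*x)))) x := by
      have h2 : HasDerivAt (fun x : ℝ => -(c * x ^ 2)) (-(c * (2*x))) x := by
        simpa using ((hasDerivAt_pow 2 x).const_mul c).fun_neg
      exact (Real.hasDerivAt_exp _).comp x h2
    have h := h1.mul he
    have heq : g c x - (1/2) * Real.exp (-(c * x ^ 2))
        = -(1/2) * Real.exp (-(c * x ^ 2)) + -(x/2) * (Real.exp (-(c * x ^ 2)) * (-(c * (2*x)))) := by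
      unfold g; ring
    rw [heq]; exact h
  have hint : IntervalIntegrable (fun x => g c x - (1/2) * Real.exp (-(c * x ^ 2))) volume (-(1/2)) (1/2) := by
    apply Continuous.intervalIntegrable
    unfold g; fun_prop
  have hFTC := intervalIntegral.integral_eq_sub_of_hasDerivAt hder hint
  have hsplit : (∫ x in (-(1/2):ℝ)..(1/2), (g c x - (1/2) * Real.exp (-(c * x ^ 2))))
      = (∫ x in (-(1/2):ℝ)..(1/2), g c x) - ∫ x in (-(1/2):ℝ)..(1/2), (1/2) * Real.exp (-(c * x ^ 2)) := by
    apply intervalIntegral.integral_sub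
    · exact (by unfold g; fun_prop : Continuous (g c)).intervalIntegrable _ _
    · exact ((intg_exp c _ _).const_mul _)
  have hval : F (1/2) - F (-(1/2)) ≤ 0 := by
    have : F (1/2) - F (-(1/2)) = -(Real.exp (-(c * (1/2:ℝ) ^ 2))) / 2 := by
      simp only [hF]; norm_num; ring
    rw [this]
    have := (Real.exp_pos (-(c * (1/2:ℝ) ^ 2))).le
    linarith
  have h2 : (∫ x in (-(1/2):ℝ)..(1/2), (1/2) * Real.exp (-(c * x ^ 2)))
      = (1/2) * ∫ x in (-(1/2):ℝ)..(1/2), Real.exp (-(c * x ^ 2)) :=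
    intervalIntegral.integral_const_mul _ _
  have hI0 := I0_le hc
  rw [hsplit] at hFTC
  have := hFTC ▸ hval   -- (∫ g) - ∫ (1/2) e ≤ 0
  nlinarith [hI0, h2, hFTC, hval]

/-- `∫ (2c+10c²x²+4c³x⁴)e^{-cx²} ≤ 10 c √(π/c)` -/
lemma integral_P_le {c : ℝ} (hc : 0 < c) :
    ∫ x in (-(1/2) : ℝ)..(1/2), (2*c + 10*c^2*x^2 + 4*c^3*x^4) * Real.exp (-(c * x ^ 2))
      ≤ 10 * c * Real.sqrt (π / c) := by
  set F : ℝ → ℝ := fun x => -(8*c*x + 2*c^2*x^3) * Real.exp (-(c * x ^ 2)) with hF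
  have hder : ∀ x ∈ Set.uIcc (-(1/2):ℝ) (1/2), HasDerivAt F
      ((2*c + 10*c^2*x^2 + 4*c^3*x^4) * Real.exp (-(c * x ^ 2)) - 10*c * Real.exp (-(c * x ^ 2))) x := by
    intro x _
    have h1 : HasDerivAt (fun x : ℝ => -(8*c*x + 2*c^2*x^3)) (-(8*c + 2*c^2*(3*x^2))) x := by
      have ha : HasDerivAt (fun x : ℝ => 8*c*x) (8*c) x := by
        simpa using (hasDerivAt_id x).const_mul (8*c)
      have hb : HasDerivAt (fun x : ℝ => 2*c^2*x^3) (2*c^2*(3*x^2)) x := by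
        simpa using (hasDerivAt_pow 3 x).const_mul (2*c^2)
      simpa using (ha.fun_add hb).fun_neg
    have he : HasDerivAt (fun x : ℝ => Real.exp (-(c * x ^ 2)))
        (Real.exp (-(c * x ^ 2)) * (-(c * (2*x)))) x := by
      have h2 : HasDerivAt (fun x : ℝ => -(c * x ^ 2)) (-(c * (2*x))) x := by
        simpa using ((hasDerivAt_pow 2 x).const_mul c).fun_neg
      exact (Real.hasDerivAt_exp _).comp x h2
    have h := h1.mul he
    have heq : (2*c + 10*c^2*x^2 + 4*c^3*x^4) * Real.exp (-(c * x ^ 2)) - 10*c * Real.exp (-(c * x ^ 2))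
        = -(8*c + 2*c^2*(3*x^2)) * Real.exp (-(c * x ^ 2))
          + -(8*c*x + 2*c^2*x^3) * (Real.exp (-(c * x ^ 2)) * (-(c * (2*x)))) := by ring
    rw [heq]; exact h
  have hint : IntervalIntegrable (fun x => (2*c + 10*c^2*x^2 + 4*c^3*x^4) * Real.exp (-(c * x ^ 2))
      - 10*c * Real.exp (-(c * x ^ 2))) volume (-(1/2)) (1/2) := by
    apply Continuous.intervalIntegrable; fun_prop
  have hFTC := intervalIntegral.integral_eq_sub_of_hasDerivAt hder hint
  have hsplit : (∫ x in (-(1/2):ℝ)..(1/2), ((2*c + 10*c^2*x^2 + 4*c^3*x^4) * Real.exp (-(c * x ^ 2))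
      - 10*c * Real.exp (-(c * x ^ 2))))
      = (∫ x in (-(1/2):ℝ)..(1/2), (2*c + 10*c^2*x^2 + 4*c^3*x^4) * Real.exp (-(c * x ^ 2)))
        - ∫ x in (-(1/2):ℝ)..(1/2), 10*c * Real.exp (-(c * x ^ 2)) := by
    apply intervalIntegral.integral_sub
    · exact (by fun_prop : Continuous fun x : ℝ =>
        (2*c + 10*c^2*x^2 + 4*c^3*x^4) * Real.exp (-(c * x ^ 2))).intervalIntegrable _ _
    · exact ((intg_exp c _ _).const_mul _)
  have hval : F (1/2) - F (-(1/2)) ≤ 0 := by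
    have : F (1/2) - F (-(1/2)) = -((8*c*(1/2:ℝ) + 2*c^2*(1/2:ℝ)^3) * Real.exp (-(c * (1/2:ℝ) ^ 2))) * 2 := by
      simp only [hF]; norm_num; ring
    rw [this]
    have h1 := (Real.exp_pos (-(c * (1/2:ℝ) ^ 2))).le
    nlinarith [hc.le]
  have h2 : (∫ x in (-(1/2):ℝ)..(1/2), 10*c * Real.exp (-(c * x ^ 2)))
      = 10*c * ∫ x in (-(1/2):ℝ)..(1/2), Real.exp (-(c * x ^ 2)) :=
    intervalIntegral.integral_const_mul _ _
  have hI0 := I0_le hc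
  rw [hsplit] at hFTC
  nlinarith [hFTC, hval, h2, hI0, hc.le]

lemma abs_g1_half {c : ℝ} (hc : 0 < c) : |g1 c (1/2)| ≤ 8 := by
  have hval : g1 c (1/2) = (c - c^2/4) * Real.exp (-(c/4)) := by
    unfold g1
    rw [show -(c * (1/2:ℝ)^2) = -(c/4) by ring]
    ring
  rw [hval, abs_mul, abs_of_pos (Real.exp_pos _)]
  -- exp(-(c/4)) ≤ 1/(1+c/12)^3
  have hbase : (0:ℝ) < 1 + c/12 := by linarith
  have hcube : (1 + c/12)^3 ≤ Real.exp (c/4) := by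
    have h := Real.add_one_le_exp (c/12)
    calc (1 + c/12)^3 ≤ (Real.exp (c/12))^3 := by
          apply pow_le_pow_left₀ hbase.le; linarith
      _ = Real.exp (c/4) := by
          rw [← Real.exp_nat_mul]; norm_num; ring_nf
  have hexp : Real.exp (-(c/4)) ≤ ((1 + c/12)^3)⁻¹ := by
    rw [Real.exp_neg]
    exact inv_anti₀ (by positivity) hcube
  have habs : |c - c^2/4| ≤ c + c^2/4 := by
    rw [abs_le]; constructor <;> nlinarith [sq_nonneg c, hc.le]
  have hpos3 : (0:ℝ) < (1 + c/12)^3 := by positivity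
  calc |c - c^2/4| * Real.exp (-(c/4)) ≤ (c + c^2/4) * ((1 + c/12)^3)⁻¹ := by
        apply mul_le_mul habs hexp (Real.exp_pos _).le (by positivity)
    _ ≤ 8 := by
        rw [← div_eq_mul_inv, div_le_iff₀ hpos3]
        nlinarith [hc.le, mul_nonneg hc.le (sq_nonneg (c - 12)), sq_nonneg c, mul_nonneg (mul_nonneg hc.le hc.le) hc.le]

lemma abs_g1_neg_half {c : ℝ} (hc : 0 < c) : |g1 c (-(1/2))| ≤ 8 := by
  have : g1 c (-(1/2)) = -(g1 c (1/2)) := by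
    unfold g1
    rw [show -(c * (-(1/2):ℝ)^2) = -(c * (1/2:ℝ)^2) by ring]
    ring
  rw [this, abs_neg]; exact abs_g1_half hc

lemma key_norm {c : ℝ} (hc : 0 < c) (k : ℤ) (hk : 1 ≤ k) :
    ‖∫ x in (-(1/2) : ℝ)..(1/2), ((g c x : ℝ) : ℂ) * ee k x‖
      ≤ (10 * c * Real.sqrt (π / c) + 16) / (4 * π^2 * (k : ℝ)^2) := by
  have hab : (-(1/2) : ℝ) ≤ 1/2 := by norm_num
  set J0 : ℂ := ∫ x in (-(1/2) : ℝ)..(1/2), ((g c x : ℝ) : ℂ) * ee k x with hJ0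
  set J1 : ℂ := ∫ x in (-(1/2) : ℝ)..(1/2), ((g1 c x : ℝ) : ℂ) * ee k x with hJ1
  set J2 : ℂ := ∫ x in (-(1/2) : ℝ)..(1/2), ((g2 c x : ℝ) : ℂ) * ee k x with hJ2
  -- integrability facts
  have int0 : IntervalIntegrable (fun x => ((g c x : ℝ) : ℂ) * ee k x) volume (-(1/2)) (1/2) :=
    (((Complex.continuous_ofReal.comp (cont_g c)).mul (cont_ee k))).intervalIntegrable _ _
  have int1 : IntervalIntegrable (fun x => ((g1 c x : ℝ) : ℂ) * ee k x) volume (-(1/2)) (1/2) :=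
    (((Complex.continuous_ofReal.comp (cont_g1 c)).mul (cont_ee k))).intervalIntegrable _ _
  have int2 : IntervalIntegrable (fun x => ((g2 c x : ℝ) : ℂ) * ee k x) volume (-(1/2)) (1/2) :=
    (((Complex.continuous_ofReal.comp (cont_g2 c)).mul (cont_ee k))).intervalIntegrable _ _
  have intE' : IntervalIntegrable (fun x => dd k * ee k x) volume (-(1/2)) (1/2) :=
    ((continuous_const.mul (cont_ee k))).intervalIntegrable _ _
  have intG1 : IntervalIntegrable (fun x => ((g1 c x : ℝ) : ℂ)) volume (-(1/2)) (1/2) :=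
    ((Complex.continuous_ofReal.comp (cont_g1 c))).intervalIntegrable _ _
  have intG2 : IntervalIntegrable (fun x => ((g2 c x : ℝ) : ℂ)) volume (-(1/2)) (1/2) :=
    ((Complex.continuous_ofReal.comp (cont_g2 c))).intervalIntegrable _ _
  -- first integration by parts
  have ibp1 := intervalIntegral.integral_deriv_mul_eq_sub
      (u := fun x => ((g c x : ℝ) : ℂ)) (v := ee k)
      (u' := fun x => ((g1 c x : ℝ) : ℂ)) (v' := fun x => dd k * ee k x)
      (fun x _ => (hasDerivAt_g c x).ofReal_comp)
      (fun x _ => hasDerivAt_ee k x) intG1 intE'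
  have ibp2 := intervalIntegral.integral_deriv_mul_eq_sub
      (u := fun x => ((g1 c x : ℝ) : ℂ)) (v := ee k)
      (u' := fun x => ((g2 c x : ℝ) : ℂ)) (v' := fun x => dd k * ee k x)
      (fun x _ => (hasDerivAt_g1 c x).ofReal_comp)
      (fun x _ => hasDerivAt_ee k x) intG2 intE'
  -- split the integrals
  have intprod0 : IntervalIntegrable (fun x => ((g c x : ℝ) : ℂ) * (dd k * ee k x)) volume (-(1/2)) (1/2) :=
    (((Complex.continuous_ofReal.comp (cont_g c)).mul (continuous_const.mul (cont_ee k)))).intervalIntegrable _ _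
  have intprod1 : IntervalIntegrable (fun x => ((g1 c x : ℝ) : ℂ) * (dd k * ee k x)) volume (-(1/2)) (1/2) :=
    (((Complex.continuous_ofReal.comp (cont_g1 c)).mul (continuous_const.mul (cont_ee k)))).intervalIntegrable _ _
  have pull0 : (∫ x in (-(1/2) : ℝ)..(1/2), ((g c x : ℝ) : ℂ) * (dd k * ee k x)) = dd k * J0 := by
    rw [hJ0, ← intervalIntegral.integral_const_mul]
    apply intervalIntegral.integral_congr
    intro x _; ring
  have pull1 : (∫ x in (-(1/2) : ℝ)..(1/2), ((g1 c x : ℝ) : ℂ) * (dd k * ee k x)) = dd k * J1 := by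
    rw [hJ1, ← intervalIntegral.integral_const_mul]
    apply intervalIntegral.integral_congr
    intro x _; ring
  rw [intervalIntegral.integral_add int1 intprod0, pull0] at ibp1
  rw [intervalIntegral.integral_add int2 intprod1, pull1] at ibp2
  -- boundary terms
  have hgeq : g c (1/2) = g c (-(1/2)) := by unfold g; norm_num
  have hb1 : ((g c (1/2) : ℝ) : ℂ) * ee k (1/2) - ((g c (-(1/2)) : ℝ) : ℂ) * ee k (-(1/2)) = 0 := by
    rw [hgeq, ee_half k]; ring
  rw [hb1] at ibp1
  set B : ℂ := ((g1 c (1/2) : ℝ) : ℂ) * ee k (1/2) - ((g1 c (-(1/2)) : ℝ) : ℂ) * ee k (-(1/2)) with hB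
  have hkey : (dd k)^2 * J0 = J2 - B := by
    rw [hB]
    linear_combination (dd k) * ibp1 - ibp2
  -- norm estimates
  have hnormB : ‖B‖ ≤ 16 := by
    calc ‖B‖ ≤ ‖((g1 c (1/2) : ℝ) : ℂ) * ee k (1/2)‖ + ‖((g1 c (-(1/2)) : ℝ) : ℂ) * ee k (-(1/2))‖ :=
          norm_sub_le _ _
      _ ≤ 16 := by
          rw [norm_mul, norm_mul, norm_ee, norm_ee, Complex.norm_real, Complex.norm_real]
          have := abs_g1_half hc
          have := abs_g1_neg_half hc
          simp only [Real.norm_eq_abs]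
          linarith
  have hnormJ2 : ‖J2‖ ≤ 10 * c * Real.sqrt (π / c) := by
    calc ‖J2‖ ≤ ∫ x in (-(1/2) : ℝ)..(1/2), ‖((g2 c x : ℝ) : ℂ) * ee k x‖ :=
          intervalIntegral.norm_integral_le_integral_norm hab
      _ = ∫ x in (-(1/2) : ℝ)..(1/2), |g2 c x| := by
          apply intervalIntegral.integral_congr
          intro x _
          show ‖((g2 c x : ℝ) : ℂ) * ee k x‖ = |g2 c x|
          rw [norm_mul, norm_ee, Complex.norm_real, mul_one, Real.norm_eq_abs]
      _ ≤ ∫ x in (-(1/2) : ℝ)..(1/2), (2*c + 10*c^2*x^2 + 4*c^3*x^4) * Real.exp (-(c * x ^ 2)) := by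
          apply intervalIntegral.integral_mono_on hab
          · exact ((cont_g2 c).abs).intervalIntegrable _ _
          · exact (by fun_prop : Continuous fun x : ℝ =>
              (2*c + 10*c^2*x^2 + 4*c^3*x^4) * Real.exp (-(c * x ^ 2))).intervalIntegrable _ _
          · intro x _
            unfold g2
            rw [abs_mul, abs_of_pos (Real.exp_pos _)]
            apply mul_le_mul_of_nonneg_right _ (Real.exp_pos _).le
            rw [abs_le]
            constructor <;>
              nlinarith [mul_nonneg (mul_nonneg hc.le hc.le) (sq_nonneg x),
                mul_nonneg (mul_nonneg (mul_nonneg hc.le hc.le) hc.le) (sq_nonneg (x^2)), hc.le]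
      _ ≤ 10 * c * Real.sqrt (π / c) := integral_P_le hc
  -- put it together
  have hnd : ‖(dd k)^2 * J0‖ = (2 * π * (k:ℝ))^2 * ‖J0‖ := by
    rw [norm_mul, norm_pow, norm_dd k hk]
  have hle : (2 * π * (k:ℝ))^2 * ‖J0‖ ≤ 10 * c * Real.sqrt (π / c) + 16 := by
    rw [← hnd, hkey]
    calc ‖J2 - B‖ ≤ ‖J2‖ + ‖B‖ := norm_sub_le _ _
      _ ≤ 10 * c * Real.sqrt (π / c) + 16 := by linarith
  have hkpos : (0:ℝ) < (k:ℝ) := by exact_mod_cast hk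
  have hden : (0:ℝ) < 4 * π^2 * (k:ℝ)^2 := by positivity
  rw [le_div_iff₀ hden]
  calc ‖J0‖ * (4 * π^2 * (k:ℝ)^2) = (2 * π * (k:ℝ))^2 * ‖J0‖ := by ring
    _ ≤ 10 * c * Real.sqrt (π / c) + 16 := hle

lemma fc_eq (ℓ : ℝ) (k : ℤ) :
    fourierCoeff1 (fun x => (x ^ 2 / (2 * ℓ ^ 2)) * Real.exp (-x ^ 2 / (2 * ℓ ^ 2))) k
      = ∫ x in (-(1/2) : ℝ)..(1/2), ((g ((2 * ℓ ^ 2)⁻¹) x : ℝ) : ℂ) * ee k x := by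
  unfold fourierCoeff1
  apply intervalIntegral.integral_congr
  intro x _
  have hreal : (x ^ 2 / (2 * ℓ ^ 2)) * Real.exp (-x ^ 2 / (2 * ℓ ^ 2)) = g ((2 * ℓ ^ 2)⁻¹) x := by
    unfold g
    rw [show -x ^ 2 / (2 * ℓ ^ 2) = -((2 * ℓ ^ 2)⁻¹ * x ^ 2) by ring]
    ring
  show ((((x ^ 2 / (2 * ℓ ^ 2)) * Real.exp (-x ^ 2 / (2 * ℓ ^ 2)) : ℝ)) : ℂ)
      * Complex.exp (-(2 * (π : ℂ) * Complex.I) * (k : ℂ) * (x : ℂ))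
    = ((g ((2 * ℓ ^ 2)⁻¹) x : ℝ) : ℂ) * ee k x
  rw [hreal]; rfl

lemma sqrt_bound {ℓ : ℝ} (hℓ : 0 < ℓ) : Real.sqrt (π / (2 * ℓ ^ 2)⁻¹) ≤ 2.51 * ℓ := by
  have h : π / (2 * ℓ ^ 2)⁻¹ = π * (2 * ℓ ^ 2) := by
    field_simp
  rw [h]
  have h2 : π * (2 * ℓ ^ 2) ≤ (2.51 * ℓ)^2 := by nlinarith [Real.pi_lt_d2, sq_nonneg ℓ]
  calc Real.sqrt (π * (2 * ℓ ^ 2)) ≤ Real.sqrt ((2.51 * ℓ)^2) := Real.sqrt_le_sqrt h2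
    _ = 2.51 * ℓ := Real.sqrt_sq (by positivity)

lemma bnd1 {ℓ : ℝ} (hℓ : 0 < ℓ) (k : ℤ) :
    ‖fourierCoeff1 (fun x => (x ^ 2 / (2 * ℓ ^ 2)) * Real.exp (-x ^ 2 / (2 * ℓ ^ 2))) k‖
      ≤ 63/50 * ℓ := by
  rw [fc_eq]
  set c : ℝ := (2 * ℓ ^ 2)⁻¹ with hc'
  have hc : 0 < c := by positivity
  have h1 : ‖∫ x in (-(1/2) : ℝ)..(1/2), ((g c x : ℝ) : ℂ) * ee k x‖
      ≤ ∫ x in (-(1/2) : ℝ)..(1/2), ‖((g c x : ℝ) : ℂ) * ee k x‖ :=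
    intervalIntegral.norm_integral_le_integral_norm (by norm_num)
  have h2 : (∫ x in (-(1/2) : ℝ)..(1/2), ‖((g c x : ℝ) : ℂ) * ee k x‖)
      = ∫ x in (-(1/2) : ℝ)..(1/2), g c x := by
    apply intervalIntegral.integral_congr
    intro x _
    show ‖((g c x : ℝ) : ℂ) * ee k x‖ = g c x
    rw [norm_mul, norm_ee, Complex.norm_real, mul_one, Real.norm_eq_abs]
    exact abs_of_nonneg (by unfold g; positivity)
  have h3 := integral_g_le hc
  have h4 := sqrt_bound hℓ
  calc ‖∫ x in (-(1/2) : ℝ)..(1/2), ((g c x : ℝ) : ℂ) * ee k x‖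
      ≤ Real.sqrt (π / c) / 2 := by rw [← h2] at h3; linarith
    _ ≤ 63/50 * ℓ := by rw [hc'] at *; linarith

lemma bnd2 {ℓ : ℝ} (hℓ : 0 < ℓ) (k : ℤ) (hk : 1 ≤ k) :
    ‖fourierCoeff1 (fun x => (x ^ 2 / (2 * ℓ ^ 2)) * Real.exp (-x ^ 2 / (2 * ℓ ^ 2))) k‖
      ≤ (8/25 * (1/ℓ) + 41/100) / (k : ℝ)^2 := by
  rw [fc_eq]
  set c : ℝ := (2 * ℓ ^ 2)⁻¹ with hc'
  have hc : 0 < c := by positivity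
  have h1 := key_norm hc k hk
  have h4 := sqrt_bound hℓ
  have hc_le : 10 * c * Real.sqrt (π / c) ≤ 12.55 * (1/ℓ) := by
    have hcval : c = (2 * ℓ ^ 2)⁻¹ := hc'
    have : 10 * c * Real.sqrt (π / c) ≤ 10 * c * (2.51 * ℓ) := by
      apply mul_le_mul_of_nonneg_left _ (by positivity)
      rw [hc']; exact h4
    calc 10 * c * Real.sqrt (π / c) ≤ 10 * c * (2.51 * ℓ) := this
      _ = 12.55 * (1/ℓ) := by rw [hcval]; field_simp; ring
  have hkpos : (0:ℝ) < (k:ℝ) := by exact_mod_cast hk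
  have hk1 : (1:ℝ) ≤ (k:ℝ) := by exact_mod_cast hk
  have hπ2 : (9.8596:ℝ) ≤ π^2 := by nlinarith [Real.pi_gt_d2]
  have hmain : (10 * c * Real.sqrt (π / c) + 16) / (4 * π^2 * (k : ℝ)^2)
      ≤ (8/25 * (1/ℓ) + 41/100) / (k : ℝ)^2 := by
    rw [div_le_div_iff₀ (by positivity) (by positivity)]
    have ht : (0:ℝ) < 1/ℓ := by positivity
    have hnum : 10 * c * Real.sqrt (π / c) + 16 ≤ 12.55 * (1/ℓ) + 16 := by linarith
    have hkey : (12.55 * (1/ℓ) + 16) ≤ (8/25 * (1/ℓ) + 41/100) * (4 * π^2) := by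
      nlinarith [ht.le, hπ2]
    calc (10 * c * Real.sqrt (π / c) + 16) * (k:ℝ)^2
        ≤ ((8/25 * (1/ℓ) + 41/100) * (4 * π^2)) * (k:ℝ)^2 := by
          apply mul_le_mul_of_nonneg_right _ (by positivity)
          linarith
      _ = (8/25 * (1/ℓ) + 41/100) * (4 * π^2 * (k:ℝ)^2) := by ring
  exact le_trans h1 hmain

/-- telescoping bound -/
lemma sum_inv_sq_aux (K : ℕ) (hK : 1 ≤ K) :
    ∀ N : ℕ, ∑ k ∈ Finset.Icc (K+1) N, (1:ℝ)/(k:ℝ)^2 ≤ 1/(K:ℝ) - 1/(max K N : ℕ) := by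
  intro N
  induction N with
  | zero =>
      rw [Finset.Icc_eq_empty (by omega)]
      simp [Nat.max_eq_left (Nat.zero_le K)]
  | succ N ih =>
      rcases le_or_gt (N+1) K with h | h
      · rw [Finset.Icc_eq_empty (by omega)]
        rw [Nat.max_eq_left h]
        simp
      · have hKN : K ≤ N := by omega
        rw [Finset.sum_Icc_succ_top (by omega : K+1 ≤ N+1)]
        rw [Nat.max_eq_right hKN] at ih
        rw [Nat.max_eq_right (by omega : K ≤ N+1)]
        have hN1 : (1:ℝ) ≤ (N:ℝ) := by exact_mod_cast le_trans hK hKN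
        have hstep : 1/((N:ℝ)+1)^2 + 1/((N:ℝ)+1) ≤ 1/(N:ℝ) := by
          rw [div_add_div _ _ (by positivity) (by positivity), div_le_div_iff₀ (by positivity) (by positivity)]
          nlinarith
        push_cast
        push_cast at ih
        linarith
  
lemma sum_inv_sq (K : ℕ) (hK : 1 ≤ K) (N : ℕ) :
    ∑ k ∈ Finset.Icc (K+1) N, (1:ℝ)/(k:ℝ)^2 ≤ 1/(K:ℝ) := by
  have h := sum_inv_sq_aux K hK N
  have : (0:ℝ) ≤ 1/(max K N : ℕ) := by positivity
  linarith

lemma sum_inv_sq_all (N : ℕ) : ∑ k ∈ Finset.Icc 1 N, (1:ℝ)/(k:ℝ)^2 ≤ 2 := by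
  rcases Nat.eq_zero_or_pos N with h | h
  · subst h; simp
  · have hins : Finset.Icc 1 N = insert 1 (Finset.Icc 2 N) := by
      ext k; simp [Finset.mem_Icc, Finset.mem_insert]; omega
    rw [hins, Finset.sum_insert (by simp)]
    have h2 := sum_inv_sq 1 le_rfl N
    simp only [one_div] at h2 ⊢
    norm_num at h2 ⊢
    linarith

end DG

/-- For the derivative Gaussian `g(x) = (x²/(2ℓ²)) e^{−x²/(2ℓ²)}` and even `m ≥ 2`,
`Σ_{k=1}^{m/2} |c_k(g)| < 7/2`. -/
theorem derGauss_fourier_coeff_partial_sum (ℓ : ℝ) (hℓ : 0 < ℓ) (m : ℕ) (hm : Even m)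
    (hm2 : 2 ≤ m) :
    (∑ k ∈ Finset.Icc 1 (m / 2),
        ‖fourierCoeff1 (fun x => (x ^ 2 / (2 * ℓ ^ 2)) * Real.exp (-x ^ 2 / (2 * ℓ ^ 2)))
          (k : ℤ)‖) < 7/2 := by
  set G : ℝ → ℝ := fun x => (x ^ 2 / (2 * ℓ ^ 2)) * Real.exp (-x ^ 2 / (2 * ℓ ^ 2)) with hG
  set N : ℕ := m / 2 with hN
  have hterm2 : ∀ k : ℕ, k ∈ Finset.Icc 1 N →
      ‖fourierCoeff1 G ((k:ℕ) : ℤ)‖ ≤ (8/25 * (1/ℓ) + 41/100) / (k : ℝ)^2 := by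
    intro k hk
    have hk1 : 1 ≤ k := (Finset.mem_Icc.mp hk).1
    have h := DG.bnd2 hℓ ((k:ℕ) : ℤ) (by exact_mod_cast hk1)
    have hcast : (((k:ℕ) : ℤ) : ℝ) = (k : ℝ) := by push_cast; rfl
    rwa [hcast] at h
  rcases le_or_gt (1/2 : ℝ) ℓ with hl | hl
  · -- ℓ ≥ 1/2 : use the 1/k² bound everywhere
    have hinv : 1/ℓ ≤ 2 := by
      rw [div_le_iff₀ hℓ]; linarith
    have hcoef : (0:ℝ) ≤ 8/25 * (1/ℓ) + 41/100 := by positivity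
    calc (∑ k ∈ Finset.Icc 1 N, ‖fourierCoeff1 G ((k:ℕ) : ℤ)‖)
        ≤ ∑ k ∈ Finset.Icc 1 N, (8/25 * (1/ℓ) + 41/100) / (k : ℝ)^2 :=
          Finset.sum_le_sum hterm2
      _ = (8/25 * (1/ℓ) + 41/100) * ∑ k ∈ Finset.Icc 1 N, (1:ℝ)/(k : ℝ)^2 := by
          rw [Finset.mul_sum]; apply Finset.sum_congr rfl; intro k _; ring
      _ ≤ (8/25 * 2 + 41/100) * 2 := by
          have h1 := DG.sum_inv_sq_all N
          have h2 : (0:ℝ) ≤ ∑ k ∈ Finset.Icc 1 N, (1:ℝ)/(k : ℝ)^2 :=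
            Finset.sum_nonneg fun k _ => by positivity
          nlinarith
      _ < 7/2 := by norm_num
  · -- ℓ < 1/2 : split at K = ⌈1/(2ℓ)⌉
    set K : ℕ := ⌈1/(2*ℓ)⌉₊ with hK
    have hpos : (0:ℝ) < 1/(2*ℓ) := by positivity
    have hgt1 : (1:ℝ) < 1/(2*ℓ) := by
      rw [lt_div_iff₀ (by positivity)]; linarith
    have hKge : 1/(2*ℓ) ≤ (K:ℝ) := Nat.le_ceil _
    have hK1 : 1 ≤ K := by
      by_contra h
      push_neg at h
      interval_cases K
      · norm_num at hKge
        have h5 : (0:ℝ) < ℓ⁻¹ := inv_pos.mpr hℓ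
        nlinarith
    have hKle : (K:ℝ) ≤ 1/ℓ := by
      have h := Nat.ceil_lt_add_one hpos.le
      have : 1/(2*ℓ) + 1 ≤ 1/ℓ := by
        rw [div_add' _ _ _ (by positivity : (2*ℓ) ≠ 0), div_le_div_iff₀ (by positivity) hℓ]
        nlinarith
      have h4 : (K:ℝ) < 1/ℓ := lt_of_lt_of_le h this
      exact h4.le
    -- split the sum
    have hsub : Finset.Icc 1 N ⊆ Finset.Icc 1 K ∪ Finset.Icc (K+1) N := by
      intro k hk
      simp only [Finset.mem_Icc, Finset.mem_union] at *
      omega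
    have hdisj : Disjoint (Finset.Icc 1 K) (Finset.Icc (K+1) N) := by
      rw [Finset.disjoint_left]
      intro a ha hb
      simp only [Finset.mem_Icc] at *
      omega
    have hnn : ∀ k ∈ Finset.Icc 1 K ∪ Finset.Icc (K+1) N, (0:ℝ) ≤ ‖fourierCoeff1 G ((k:ℕ) : ℤ)‖ :=
      fun k _ => norm_nonneg _
    have hsplit : (∑ k ∈ Finset.Icc 1 N, ‖fourierCoeff1 G ((k:ℕ) : ℤ)‖)
        ≤ (∑ k ∈ Finset.Icc 1 K, ‖fourierCoeff1 G ((k:ℕ) : ℤ)‖)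
          + ∑ k ∈ Finset.Icc (K+1) N, ‖fourierCoeff1 G ((k:ℕ) : ℤ)‖ := by
      rw [← Finset.sum_union hdisj]
      exact Finset.sum_le_sum_of_subset_of_nonneg hsub fun k hk _ => norm_nonneg _
    have hfirst : (∑ k ∈ Finset.Icc 1 K, ‖fourierCoeff1 G ((k:ℕ) : ℤ)‖) ≤ 63/50 := by
      calc (∑ k ∈ Finset.Icc 1 K, ‖fourierCoeff1 G ((k:ℕ) : ℤ)‖)
          ≤ ∑ k ∈ Finset.Icc 1 K, 63/50 * ℓ :=
            Finset.sum_le_sum fun k _ => DG.bnd1 hℓ _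
        _ = (K:ℝ) * (63/50 * ℓ) := by
            rw [Finset.sum_const, Nat.card_Icc]
            simp [nsmul_eq_mul]
        _ ≤ (1/ℓ) * (63/50 * ℓ) := by
            apply mul_le_mul_of_nonneg_right hKle (by positivity)
        _ = 63/50 := by field_simp
    have hsecond : (∑ k ∈ Finset.Icc (K+1) N, ‖fourierCoeff1 G ((k:ℕ) : ℤ)‖) ≤ 21/20 := by
      have hKd : 1/(K:ℝ) ≤ 2*ℓ := by
        rw [div_le_iff₀ (by exact_mod_cast hK1 : (0:ℝ) < (K:ℝ))]
        rw [div_le_iff₀ (by positivity : (0:ℝ) < 2*ℓ)] at hKge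
        linarith
      have hK1' : 1/(K:ℝ) ≤ 1 := by
        rw [div_le_one (by exact_mod_cast hK1 : (0:ℝ) < (K:ℝ))]
        exact_mod_cast hK1
      calc (∑ k ∈ Finset.Icc (K+1) N, ‖fourierCoeff1 G ((k:ℕ) : ℤ)‖)
          ≤ ∑ k ∈ Finset.Icc (K+1) N, (8/25 * (1/ℓ) + 41/100) / (k : ℝ)^2 := by
            apply Finset.sum_le_sum
            intro k hk
            have hk1 : 1 ≤ k := by
              have := (Finset.mem_Icc.mp hk).1; omega
            have h := DG.bnd2 hℓ ((k:ℕ) : ℤ) (by exact_mod_cast hk1)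
            have hcast : (((k:ℕ) : ℤ) : ℝ) = (k : ℝ) := by push_cast; rfl
            rwa [hcast] at h
        _ = (8/25 * (1/ℓ) + 41/100) * ∑ k ∈ Finset.Icc (K+1) N, (1:ℝ)/(k : ℝ)^2 := by
            rw [Finset.mul_sum]; apply Finset.sum_congr rfl; intro k _; ring
        _ ≤ (8/25 * (1/ℓ) + 41/100) * (1/(K:ℝ)) := by
            apply mul_le_mul_of_nonneg_left (DG.sum_inv_sq K hK1 N) (by positivity)
        _ ≤ 21/20 := by
            have hK0 : (0:ℝ) ≤ 1/(K:ℝ) := by positivity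
            have hl0 : (0:ℝ) < 1/ℓ := by positivity
            have h1 : 8/25 * (1/ℓ) * (1/(K:ℝ)) ≤ 8/25 * (1/ℓ) * (2*ℓ) :=
              mul_le_mul_of_nonneg_left hKd (by positivity)
            have h2 : (41/100 : ℝ) * (1/(K:ℝ)) ≤ 41/100 * 1 :=
              mul_le_mul_of_nonneg_left hK1' (by norm_num)
            have h3 : 8/25 * (1/ℓ) * (2*ℓ) = 16/25 := by field_simp; ring
            nlinarith
    linarith
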